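/- Define w₀ = a₀ and w_ℓ = w_{ℓ−1} a_ℓ w_{ℓ−1}, and let wᵢ' be wᵢ with the last letter a₀ removed. Then for every i ≥ 0, the words wᵢ'·a₀·(wᵢ')ᴿ and wᵢ'·(wᵢ')ᴿ are ∼_{2i}-equivalent, i.e., they have the same subsequences of length at most 2i. -/

import Mathlib

/-- The set of (scattered) subsequences of `w` of length at most `k`. -/
def subk {α : Type*} (k : ℕ) (w : List α) : Set (List α) :=
  {u | u.Sublist w ∧ u.length ≤ k}

/-- `u ∼ₖ v` : same subsequences of length at most `k`. -/
def simk {α : Type*} (k : ℕ) (u v : List α) : Prop := subk k u = subk k v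

/-- `L` is `k`-piecewise testable. -/
def IsKPT {α : Type*} (k : ℕ) (L : Set (List α)) : Prop :=
  ∀ u v : List α, simk k u v → (u ∈ L ↔ v ∈ L)

/-- `w₀ = a₀`, `w_{ℓ+1} = w_ℓ · a_{ℓ+1} · w_ℓ`, letters `aⱼ` encoded as `j : ℕ`. -/
def wrd : ℕ → List ℕ
  | 0 => [0]
  | (ℓ + 1) => wrd ℓ ++ [ℓ + 1] ++ wrd ℓ

lemma wrd_ne_nil (i : ℕ) : wrd i ≠ [] := by
  cases i with
  | zero => simp [wrd]
  | succ n => simp [wrd]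

lemma wrd_eq (i : ℕ) : (wrd i).dropLast ++ [0] = wrd i := by
  induction i with
  | zero => simp [wrd]
  | succ n ih =>
      show ((wrd n ++ [n+1]) ++ wrd n).dropLast ++ [0] = (wrd n ++ [n+1]) ++ wrd n
      rw [List.dropLast_append_of_ne_nil (wrd_ne_nil n), List.append_assoc, ih]

lemma wrd_zero_sub (i : ℕ) : [0].Sublist (wrd i) := by
  induction i with
  | zero => simp [wrd]
  | succ n ih =>
      show List.Sublist [0] ((wrd n ++ [n+1]) ++ wrd n)
      exact ih.trans (((wrd n).sublist_append_left [n+1]).trans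
        (List.sublist_append_left _ _))

/-- Key lemma: a short sublist of `wrd i` can be extended by a `0`. -/
lemma ext_zero : ∀ i : ℕ, ∀ x : List ℕ, x.Sublist (wrd i) → x.length ≤ i →
    (x ++ [0]).Sublist (wrd i) := by
  intro i
  induction i with
  | zero =>
      intro x hx hlen
      have : x = [] := List.eq_nil_of_length_eq_zero (Nat.le_zero.mp hlen)
      subst this
      simp [wrd]
  | succ n ih =>
      intro x hx hlen
      have hx' : x.Sublist ((wrd n ++ [n+1]) ++ wrd n) := hx
      rw [List.sublist_append_iff] at hx'
      obtain ⟨p, q, rfl, hp, hq⟩ := hx'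
      by_cases hql : q.length ≤ n
      · have := ih q hq hql
        have : ((p ++ q) ++ [0]).Sublist ((wrd n ++ [n+1]) ++ wrd n) := by
          rw [List.append_assoc]
          exact hp.append this
        exact this
      · -- q.length = n+1, hence p = []
        push_neg at hql
        have hqlen : q.length ≤ n + 1 := le_trans (by simp) hlen
        have hplen : p.length = 0 := by
          have := (List.length_append : (p ++ q).length = p.length + q.length) ▸ hlen
          omega
        have hp0 : p = [] := List.eq_nil_of_length_eq_zero hplen
        subst hp0
        simp only [List.nil_append]
        -- q ++ [0] ≼ wrd n ++ ([n+1] ++ wrd n)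
        show (q ++ [0]).Sublist ((wrd n ++ [n+1]) ++ wrd n)
        rw [List.append_assoc]
        exact hq.append ((wrd_zero_sub n).trans (List.sublist_append_right _ _))
 
/-- Extension lemma for the truncated word `wrd i`.dropLast. -/
lemma ext_zero' (i : ℕ) (x : List ℕ) (hx : x.Sublist ((wrd i).dropLast))
    (hlen : x.length + 1 ≤ i) : (x ++ [0]).Sublist ((wrd i).dropLast) := by
  have hsub : ((wrd i).dropLast).Sublist (wrd i) := by
    conv_rhs => rw [← wrd_eq i]
    exact List.sublist_append_left _ _
  have h1 : (x ++ [0]).Sublist (wrd i) := ext_zero i x (hx.trans hsub) (by omega)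
  have h2 : ((x ++ [0]) ++ [0]).Sublist (wrd i) := by
    apply ext_zero i (x ++ [0]) h1
    simp; omega
  rw [← wrd_eq i, List.sublist_append_iff] at h2
  obtain ⟨p, q, heq, hp, hq⟩ := h2
  have hq' : q = [] ∨ q = [0] := by
    cases hq with
    | cons _ h => left; exact List.sublist_nil.mp h
    | cons_cons _ h => right; rw [List.sublist_nil.mp h]
  rcases hq' with rfl | rfl
  · rw [List.append_nil] at heq
    subst heq
    exact (List.sublist_append_left (x ++ [0]) [0]).trans hp
  · have : p = x ++ [0] := List.append_cancel_right heq.symm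
    rwa [this] at hp

theorem stmt_11 (i : ℕ) :
    simk (2 * i)
      ((wrd i).dropLast ++ [0] ++ ((wrd i).dropLast).reverse)
      ((wrd i).dropLast ++ ((wrd i).dropLast).reverse) := by
  set A := (wrd i).dropLast with hA
  unfold simk subk
  ext u
  simp only [Set.mem_setOf_eq]
  constructor
  · rintro ⟨hsub, hlen⟩
    refine ⟨?_, hlen⟩
    rw [List.sublist_append_iff] at hsub
    obtain ⟨v, z, rfl, hv, hz⟩ := hsub
    rw [List.sublist_append_iff] at hv
    obtain ⟨x, q, rfl, hx, hq⟩ := hv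
    have hq' : q = [] ∨ q = [0] := by
      cases hq with
      | cons _ h => left; exact List.sublist_nil.mp h
      | cons_cons _ h => right; rw [List.sublist_nil.mp h]
    rcases hq' with rfl | rfl
    · rw [List.append_nil]
      exact hx.append hz
    · have hlen' : x.length + 1 + z.length ≤ 2 * i := by
        simp only [List.length_append, List.length_cons, List.length_nil] at hlen
        omega
      by_cases hxl : x.length + 1 ≤ i
      · exact (ext_zero' i x hx hxl).append hz
      · have hzl : z.length + 1 ≤ i := by omega
        have hz' : z.reverse.Sublist A := by
          simpa using List.reverse_sublist.mpr hz
        have := ext_zero' i z.reverse hz' (by simpa using hzl)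
        have h0z : ([0] ++ z).Sublist A.reverse := by
          simpa using List.reverse_sublist.mpr this
        rw [List.append_assoc]
        exact hx.append h0z
  · rintro ⟨hsub, hlen⟩
    refine ⟨?_, hlen⟩
    rw [List.sublist_append_iff] at hsub
    obtain ⟨v, z, rfl, hv, hz⟩ := hsub
    refine (hv.append hz).trans ?_
    rw [List.append_assoc]
    refine (List.Sublist.refl A).append ?_
    exact List.sublist_cons_self 0 _ |>.trans (by simp)
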